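/- Directional flux estimate (Lemma 2.8): for every U ∈ 𝒢, all v*, B* ∈ ℝ³, each d ∈ {1,2,3} and every unit vector ξ ∈ ℝ^d, writing θ = θ(U, v*, B*), one has ⟨ξ, F(U)⟩·n* − ⟨ξ, B⟩·(v*·B*) ≤ ⟨ξ, v⟩·Σ_{k=4}^{7} θ_k² + ⟨ξ, v*⟩·(|B|²/2 − B·B*) + 𝒞(U; ξ)·|θ|². -/

import Mathlib

noncomputable section

open Finset

/-- An MHD state `U = (ρ, m, B, E)` viewed as a vector in `ℝ⁸`. -/
abbrev MHDState := Fin 8 → ℝ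

namespace MHD

/-- Build a state from density, momentum, magnetic field, total energy. -/
def mk (ρ : ℝ) (m B : Fin 3 → ℝ) (E : ℝ) : MHDState :=
  ![ρ, m 0, m 1, m 2, B 0, B 1, B 2, E]

/-- Density component. -/
def dens (U : MHDState) : ℝ := U 0

/-- Momentum components. -/
def mom (U : MHDState) : Fin 3 → ℝ := ![U 1, U 2, U 3]

/-- Magnetic field components. -/
def magB (U : MHDState) : Fin 3 → ℝ := ![U 4, U 5, U 6]

/-- Total energy component. -/
def toten (U : MHDState) : ℝ := U 7

/-- Euclidean dot product on `ℝ³`. -/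
def dot3 (a b : Fin 3 → ℝ) : ℝ := ∑ k, a k * b k

/-- Squared Euclidean norm on `ℝ³`. -/
def sq3 (a : Fin 3 → ℝ) : ℝ := dot3 a a

/-- Euclidean norm on `ℝ³`. -/
def norm3 (a : Fin 3 → ℝ) : ℝ := Real.sqrt (sq3 a)

/-- Velocity `v = m / ρ`. -/
def vel (U : MHDState) : Fin 3 → ℝ := fun k => mom U k / dens U

/-- Internal energy `𝓔(U) = E − (|m|²/ρ + |B|²)/2`. -/
def intE (U : MHDState) : ℝ := toten U - (sq3 (mom U) / dens U + sq3 (magB U)) / 2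

/-- Specific internal energy `e = 𝓔(U)/ρ`. -/
def specE (U : MHDState) : ℝ := intE U / dens U

/-- The admissible state set `𝒢`. -/
def Gset : Set MHDState := {U | 0 < dens U ∧ 0 < intE U}

/-- The set `𝒢_ρ` of states with positive density. -/
def Grho : Set MHDState := {U | 0 < dens U}

/-- Euclidean dot product on `ℝ⁸`. -/
def dot8 (U V : MHDState) : ℝ := ∑ i, U i * V i

/-- The vector `n* = (|v*|²/2, −v*, −B*, 1)`. -/
def nstar (vs Bs : Fin 3 → ℝ) : MHDState :=
  mk (sq3 vs / 2) (fun k => -vs k) (fun k => -Bs k) 1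

/-- The set `𝒢*`. -/
def GstarSet : Set MHDState :=
  {U | 0 < dens U ∧ ∀ vs Bs : Fin 3 → ℝ, 0 < dot8 U (nstar vs Bs) + sq3 Bs / 2}

/-- Equation of state assumption: for `ρ > 0`, `e > 0 ↔ p(ρ,e) > 0`. -/
def IsEOS (pfun : ℝ → ℝ → ℝ) : Prop :=
  ∀ ρ e : ℝ, 0 < ρ → (0 < e ↔ 0 < pfun ρ e)

/-- Pressure of a state, via the equation of state. -/
def pres (pfun : ℝ → ℝ → ℝ) (U : MHDState) : ℝ := pfun (dens U) (specE U)

/-- Total pressure `p + |B|²/2`. -/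
def ptot (pfun : ℝ → ℝ → ℝ) (U : MHDState) : ℝ := pres pfun U + sq3 (magB U) / 2

/-- The `i`-th flux `F_i(U)`. -/
def flux (pfun : ℝ → ℝ → ℝ) (i : Fin 3) (U : MHDState) : MHDState :=
  mk (dens U * vel U i)
    (fun k => dens U * vel U i * vel U k - magB U i * magB U k
      + ptot pfun U * (if k = i then 1 else 0))
    (fun k => vel U i * magB U k - magB U i * vel U k)
    (vel U i * (toten U + ptot pfun U) - magB U i * dot3 (vel U) (magB U))

/-- Directional inner product `⟨ξ, w⟩ = Σ_{k<d} ξ_k w_k` for `ξ ∈ ℝ^d`, `w ∈ ℝ³`, `d ≤ 3`. -/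
def dirDot {d : ℕ} (hd : d ≤ 3) (ξ : Fin d → ℝ) (w : Fin 3 → ℝ) : ℝ :=
  ∑ k, ξ k * w (Fin.castLE hd k)

/-- Directional flux `⟨ξ, F(U)⟩ = Σ_{i<d} ξ_i F_i(U)`. -/
def dirFlux (pfun : ℝ → ℝ → ℝ) {d : ℕ} (hd : d ≤ 3) (ξ : Fin d → ℝ) (U : MHDState) :
    MHDState :=
  ∑ i, ξ i • flux pfun (Fin.castLE hd i) U

/-- `ξ` is a unit vector. -/
def unitVec {d : ℕ} (ξ : Fin d → ℝ) : Prop := (∑ k, (ξ k) ^ 2) = 1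

/-- `𝒞_s(U) = p / (ρ √(2e))`. -/
def soundC (pfun : ℝ → ℝ → ℝ) (U : MHDState) : ℝ :=
  pres pfun U / (dens U * Real.sqrt (2 * specE U))

/-- `𝒞(U; ξ)`. -/
def waveC (pfun : ℝ → ℝ → ℝ) {d : ℕ} (hd : d ≤ 3) (ξ : Fin d → ℝ) (U : MHDState) : ℝ :=
  Real.sqrt ((soundC pfun U ^ 2 + sq3 (magB U) / dens U
    + Real.sqrt ((soundC pfun U ^ 2 + sq3 (magB U) / dens U) ^ 2
      - 4 * soundC pfun U ^ 2 * dirDot hd ξ (magB U) ^ 2 / dens U)) / 2)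

/-- Roe-type averaged velocity `v̄ = (√ρ v + √ρ̃ ṽ)/(√ρ + √ρ̃)`. -/
def roeV (U Ut : MHDState) : Fin 3 → ℝ := fun k =>
  (Real.sqrt (dens U) * vel U k + Real.sqrt (dens Ut) * vel Ut k)
    / (Real.sqrt (dens U) + Real.sqrt (dens Ut))

/-- `α_r(U, Ũ; ξ)`. -/
def alphaR (pfun : ℝ → ℝ → ℝ) {d : ℕ} (hd : d ≤ 3) (ξ : Fin d → ℝ) (U Ut : MHDState) : ℝ :=
  max (dirDot hd ξ (vel U)) (dirDot hd ξ (roeV U Ut)) + waveC pfun hd ξ U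
    + norm3 (magB U - magB Ut) / (Real.sqrt (dens U) + Real.sqrt (dens Ut))

/-- `α_l(U, Ũ; ξ)`. -/
def alphaL (pfun : ℝ → ℝ → ℝ) {d : ℕ} (hd : d ≤ 3) (ξ : Fin d → ℝ) (U Ut : MHDState) : ℝ :=
  min (dirDot hd ξ (vel U)) (dirDot hd ξ (roeV U Ut)) - waveC pfun hd ξ U
    - norm3 (magB U - magB Ut) / (Real.sqrt (dens U) + Real.sqrt (dens Ut))

/-- `α_⋆(U, Ũ; ξ)`. -/
def alphaS (pfun : ℝ → ℝ → ℝ) {d : ℕ} (hd : d ≤ 3) (ξ : Fin d → ℝ) (U Ut : MHDState) : ℝ :=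
  max (|dirDot hd ξ (vel U)|) (|dirDot hd ξ (roeV U Ut)|) + waveC pfun hd ξ U
    + norm3 (magB U - magB Ut) / (Real.sqrt (dens U) + Real.sqrt (dens Ut))

/-- The vector `θ(U, v*, B*) = 2^{−1/2}(B − B*, √ρ(v − v*), √(2ρe)) ∈ ℝ⁷`. -/
def theta (U : MHDState) (vs Bs : Fin 3 → ℝ) : Fin 7 → ℝ :=
  ![(magB U 0 - Bs 0) / Real.sqrt 2,
    (magB U 1 - Bs 1) / Real.sqrt 2,
    (magB U 2 - Bs 2) / Real.sqrt 2,
    Real.sqrt (dens U) * (vel U 0 - vs 0) / Real.sqrt 2,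
    Real.sqrt (dens U) * (vel U 1 - vs 1) / Real.sqrt 2,
    Real.sqrt (dens U) * (vel U 2 - vs 2) / Real.sqrt 2,
    Real.sqrt (2 * intE U) / Real.sqrt 2]

/-- `|θ|²`. -/
def thetaSq (U : MHDState) (vs Bs : Fin 3 → ℝ) : ℝ := ∑ k, theta U vs Bs k ^ 2

/-- Godunov–Powell source vector `S(U) = (0, B, v, v·B)`. -/
def source (U : MHDState) : MHDState := mk 0 (magB U) (vel U) (dot3 (vel U) (magB U))

/-- HLL numerical flux with clamped wave speeds `σm ≤ 0 ≤ σp`. -/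
def hllFlux (pfun : ℝ → ℝ → ℝ) {d : ℕ} (hd : d ≤ 3) (ξ : Fin d → ℝ)
    (Um Up : MHDState) (σm σp : ℝ) : MHDState :=
  (σp - σm)⁻¹ • (σp • dirFlux pfun hd ξ Um - σm • dirFlux pfun hd ξ Up
    + (σm * σp) • (Up - Um))

/-- HLL intermediate state `H(U⁻, U⁺; ξ)`. -/
def hllMid (pfun : ℝ → ℝ → ℝ) {d : ℕ} (hd : d ≤ 3) (ξ : Fin d → ℝ)
    (Um Up : MHDState) (σm σp : ℝ) : MHDState :=
  (σp - σm)⁻¹ • (σp • Up - dirFlux pfun hd ξ Up - σm • Um + dirFlux pfun hd ξ Um)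

/-- The quantity `α̂_j` of Theorem 2.3. -/
def alphaHat (pfun : ℝ → ℝ → ℝ) {d : ℕ} (hd : d ≤ 3) {N : ℕ}
    (s : Fin N → ℝ) (ξ : Fin N → Fin d → ℝ) (U : Fin N → MHDState) (j : Fin N) : ℝ :=
  max (dirDot hd (ξ j) (vel (U j)))
      ((∑ i, s i)⁻¹ * ∑ i, s i * dirDot hd (fun k => ξ j k - ξ i k) (roeV (U j) (U i)))
  + waveC pfun hd (ξ j) (U j)
  + 2 * (∑ i, s i)⁻¹ * ∑ i, s i *
      (norm3 (magB (U j) - magB (U i)) / (Real.sqrt (dens (U j)) + Real.sqrt (dens (U i))))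

def d1le3 : (1 : ℕ) ≤ 3 := by omega
def d2le3 : (2 : ℕ) ≤ 3 := by omega

/-- In one dimension the direction `ξ = 1`. -/
def xi1 : Fin 1 → ℝ := fun _ => 1


lemma sq3_nonneg (a : Fin 3 → ℝ) : 0 ≤ sq3 a := by
  simp only [sq3, dot3, Fin.sum_univ_three]
  nlinarith [sq_nonneg (a 0), sq_nonneg (a 1), sq_nonneg (a 2)]

lemma norm3_nonneg (a : Fin 3 → ℝ) : 0 ≤ norm3 a := Real.sqrt_nonneg _

lemma norm3_sq (a : Fin 3 → ℝ) : norm3 a ^ 2 = sq3 a := Real.sq_sqrt (sq3_nonneg a)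

lemma cs3 (a b : Fin 3 → ℝ) : dot3 a b ^ 2 ≤ sq3 a * sq3 b := by
  simp only [sq3, dot3, Fin.sum_univ_three]
  nlinarith [sq_nonneg (a 0 * b 1 - a 1 * b 0), sq_nonneg (a 0 * b 2 - a 2 * b 0),
    sq_nonneg (a 1 * b 2 - a 2 * b 1)]

lemma abs_dot3_le (a b : Fin 3 → ℝ) : |dot3 a b| ≤ norm3 a * norm3 b := by
  have h := cs3 a b
  have h2 : |dot3 a b| = Real.sqrt (dot3 a b ^ 2) := (Real.sqrt_sq_eq_abs _).symm
  rw [h2, norm3, norm3, ← Real.sqrt_mul (sq3_nonneg a)]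
  exact Real.sqrt_le_sqrt h

lemma perp_dot (ξ a b : Fin 3 → ℝ) (hξ : sq3 ξ = 1) :
    dot3 (fun k => a k - dot3 ξ a * ξ k) (fun k => b k - dot3 ξ b * ξ k)
      = dot3 a b - dot3 ξ a * dot3 ξ b := by
  simp only [dot3, sq3, Fin.sum_univ_three] at hξ ⊢
  linear_combination ((ξ 0 * a 0 + ξ 1 * a 1 + ξ 2 * a 2)
    * (ξ 0 * b 0 + ξ 1 * b 1 + ξ 2 * b 2)) * hξ

lemma core' (c pb qb D u w s f : ℝ) (hc : 0 ≤ c) (hpb : 0 ≤ pb) (hqb : 0 ≤ qb)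
    (hD : 0 ≤ D) (hu : 0 ≤ u) (hw : 0 ≤ w) (hs : 0 ≤ s) (hf : 0 < f)
    (h1 : c ≤ f) (h2 : qb ≤ f)
    (h3 : (f^2 - c^2) * (f^2 - qb^2) = pb^2 * f^2) :
    c*s*u + pb*D*u + qb*D*w ≤ f*(D^2+u^2+w^2+s^2)/2 := by
  rcases eq_or_lt_of_le h1 with h | h
  · subst h
    have hpb0 : pb = 0 := by
      have h0 : pb^2 * c^2 = 0 := by rw [← h3]; ring
      have h0' : pb^2 = 0 := by
        rcases mul_eq_zero.mp h0 with h' | h'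
        · exact h'
        · exact absurd h' (by positivity)
      exact pow_eq_zero_iff (n := 2) (by norm_num) |>.mp h0'
    subst hpb0
    have key : 2*c*(c*s*u + 0*D*u + qb*D*w) ≤ 2*c*(c*(D^2+u^2+w^2+s^2)/2) := by
      nlinarith [sq_nonneg (c*s - c*u), sq_nonneg (qb*D - c*w),
        mul_nonneg (mul_nonneg (sub_nonneg.mpr (mul_self_le_mul_self hqb h2)) hD) hD]
    exact le_of_mul_le_mul_left key (by linarith)
  · have hfc : 0 < f^2 - c^2 := by nlinarith
    have key : 2*f*(f^2-c^2)*(c*s*u + pb*D*u + qb*D*w)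
        ≤ 2*f*(f^2-c^2)*(f*(D^2+u^2+w^2+s^2)/2) := by
      nlinarith [mul_nonneg hfc.le (sq_nonneg (f*s - c*u)),
        sq_nonneg (pb*f*D - (f^2-c^2)*u),
        mul_nonneg hfc.le (sq_nonneg (qb*D - f*w))]
    exact le_of_mul_le_mul_left key (by positivity)

set_option maxHeartbeats 1000000 in
lemma keyIneq (ρ ie p c f : ℝ) (ξ B dB dv : Fin 3 → ℝ)
    (hρ : 0 < ρ) (hie : 0 < ie) (hp : 0 < p) (hξ : sq3 ξ = 1)
    (hc0 : 0 ≤ c) (hcp : c * (Real.sqrt (2*ie) * Real.sqrt ρ) = p)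
    (hf : 0 < f) (h1 : c ≤ f) (h2 : |dot3 ξ B| / Real.sqrt ρ ≤ f)
    (h3 : (f^2 - c^2) * (f^2 - (dot3 ξ B)^2/ρ) = ((sq3 B - (dot3 ξ B)^2)/ρ) * f^2) :
    dot3 ξ dv * (p + dot3 B dB) - dot3 ξ B * dot3 dB dv
      ≤ f * ((sq3 dB + ρ * sq3 dv + 2*ie)/2) := by
  set x := dot3 ξ dv with hx
  set Bξ := dot3 ξ B with hBξ
  set β := dot3 ξ dB with hβ
  set Bp : Fin 3 → ℝ := fun k => B k - Bξ * ξ k with hBp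
  set dBp : Fin 3 → ℝ := fun k => dB k - β * ξ k with hdBp
  set dvp : Fin 3 → ℝ := fun k => dv k - x * ξ k with hdvp
  have e1 : dot3 Bp dBp = dot3 B dB - Bξ * β := perp_dot ξ B dB hξ
  have e2 : dot3 dBp dvp = dot3 dB dv - β * x := perp_dot ξ dB dv hξ
  have e3 : sq3 dBp = sq3 dB - β^2 := by
    have := perp_dot ξ dB dB hξ; simpa [sq3, sq] using this
  have e4 : sq3 dvp = sq3 dv - x^2 := by
    have := perp_dot ξ dv dv hξ; simpa [sq3, sq] using this
  have e5 : sq3 Bp = sq3 B - Bξ^2 := by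
    have := perp_dot ξ B B hξ; simpa [sq3, sq] using this
  have hsρ : (0:ℝ) < Real.sqrt ρ := Real.sqrt_pos.mpr hρ
  -- apply core'
  have hcore := core' c (norm3 Bp / Real.sqrt ρ) (|Bξ| / Real.sqrt ρ)
    (norm3 dBp) (Real.sqrt ρ * |x|) (Real.sqrt ρ * norm3 dvp) (Real.sqrt (2*ie)) f
    hc0 (div_nonneg (norm3_nonneg _) (Real.sqrt_nonneg _))
    (div_nonneg (abs_nonneg _) (Real.sqrt_nonneg _)) (norm3_nonneg _)
    (mul_nonneg (Real.sqrt_nonneg _) (abs_nonneg _))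
    (mul_nonneg (Real.sqrt_nonneg _) (norm3_nonneg _)) (Real.sqrt_nonneg _) hf h1 h2
    (by
      have hq : (|Bξ| / Real.sqrt ρ)^2 = Bξ^2 / ρ := by
        rw [div_pow, sq_abs, Real.sq_sqrt hρ.le]
      have hpb : (norm3 Bp / Real.sqrt ρ)^2 = (sq3 B - Bξ^2) / ρ := by
        rw [div_pow, norm3_sq, Real.sq_sqrt hρ.le, e5]
      rw [hq, hpb]; exact h3)
  -- translate terms
  have t1 : c * Real.sqrt (2*ie) * (Real.sqrt ρ * |x|) = p * |x| := by
    rw [← hcp]; ring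
  have t2 : norm3 Bp / Real.sqrt ρ * norm3 dBp * (Real.sqrt ρ * |x|)
      = norm3 Bp * norm3 dBp * |x| := by
    field_simp
  have t3 : |Bξ| / Real.sqrt ρ * norm3 dBp * (Real.sqrt ρ * norm3 dvp)
      = |Bξ| * norm3 dBp * norm3 dvp := by
    field_simp
  rw [t1, t2, t3] at hcore
  have hrhs : f * ((norm3 dBp)^2 + (Real.sqrt ρ * |x|)^2 + (Real.sqrt ρ * norm3 dvp)^2
      + (Real.sqrt (2*ie))^2)/2 ≤ f * ((sq3 dB + ρ * sq3 dv + 2*ie)/2) := by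
    rw [norm3_sq, mul_pow, mul_pow, norm3_sq, Real.sq_sqrt hρ.le, sq_abs,
      Real.sq_sqrt (by positivity : (0:ℝ) ≤ 2*ie), e3, e4]
    have : sq3 dB - β^2 + (ρ * x^2 + ρ * (sq3 dv - x^2)) + 2*ie
        ≤ sq3 dB + ρ * sq3 dv + 2*ie := by nlinarith [sq_nonneg β]
    have hmono := mul_le_mul_of_nonneg_left this hf.le
    linarith
  -- bound LHS
  have lhs_eq : x * (p + dot3 B dB) - Bξ * dot3 dB dv
      = x * p + x * dot3 Bp dBp - Bξ * dot3 dBp dvp := by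
    rw [e1, e2]; ring
  have b1 : x * p ≤ p * |x| := by
    rw [mul_comm]; exact mul_le_mul_of_nonneg_left (le_abs_self x) hp.le
  have b2 : x * dot3 Bp dBp ≤ norm3 Bp * norm3 dBp * |x| := by
    calc x * dot3 Bp dBp ≤ |x * dot3 Bp dBp| := le_abs_self _
    _ = |dot3 Bp dBp| * |x| := by rw [abs_mul]; ring
    _ ≤ norm3 Bp * norm3 dBp * |x| :=
        mul_le_mul_of_nonneg_right (abs_dot3_le _ _) (abs_nonneg _)
  have b3 : -(Bξ * dot3 dBp dvp) ≤ |Bξ| * norm3 dBp * norm3 dvp := by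
    calc -(Bξ * dot3 dBp dvp) ≤ |Bξ * dot3 dBp dvp| := neg_le_abs _
    _ = |Bξ| * |dot3 dBp dvp| := abs_mul _ _
    _ ≤ |Bξ| * (norm3 dBp * norm3 dvp) :=
        mul_le_mul_of_nonneg_left (abs_dot3_le _ _) (abs_nonneg _)
    _ = |Bξ| * norm3 dBp * norm3 dvp := by ring
  rw [lhs_eq]
  calc x * p + x * dot3 Bp dBp - Bξ * dot3 dBp dvp
      ≤ p * |x| + norm3 Bp * norm3 dBp * |x| + |Bξ| * norm3 dBp * norm3 dvp := by
        linarith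
    _ ≤ f * ((norm3 dBp)^2 + (Real.sqrt ρ * |x|)^2 + (Real.sqrt ρ * norm3 dvp)^2
        + (Real.sqrt (2*ie))^2)/2 := by
        have := hcore
        linarith [hcore]
    _ ≤ f * ((sq3 dB + ρ * sq3 dv + 2*ie)/2) := hrhs
set_option maxHeartbeats 1000000 in
lemma waveC_facts (pfun : ℝ → ℝ → ℝ) {d : ℕ} (hd : d ≤ 3) (ξ : Fin d → ℝ) (U : MHDState)
    (hρ : 0 < dens U) (hc : 0 < soundC pfun U)
    (hBle : dirDot hd ξ (magB U) ^ 2 ≤ sq3 (magB U)) :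
    0 < waveC pfun hd ξ U ∧ soundC pfun U ≤ waveC pfun hd ξ U ∧
    |dirDot hd ξ (magB U)| / Real.sqrt (dens U) ≤ waveC pfun hd ξ U ∧
    (waveC pfun hd ξ U ^ 2 - soundC pfun U ^ 2)
        * (waveC pfun hd ξ U ^ 2 - dirDot hd ξ (magB U) ^ 2 / dens U)
      = ((sq3 (magB U) - dirDot hd ξ (magB U) ^ 2) / dens U) * waveC pfun hd ξ U ^ 2 := by
  set c := soundC pfun U with hcdef
  set ρ := dens U with hρdef
  set m := sq3 (magB U) with hmdef
  set bξ := dirDot hd ξ (magB U) with hbdef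
  have hm : 0 ≤ m := sq3_nonneg _
  have hρ' : (ρ:ℝ) ≠ 0 := ne_of_gt hρ
  have hinner_eq : (c^2 + m/ρ)^2 - 4*c^2*bξ^2/ρ
      = (c^2 - m/ρ)^2 + 4*c^2*(m - bξ^2)/ρ := by field_simp; ring
  have hinner_nonneg : 0 ≤ (c^2 + m/ρ)^2 - 4*c^2*bξ^2/ρ := by
    rw [hinner_eq]
    have h1 : 0 ≤ 4*c^2*(m - bξ^2)/ρ :=
      div_nonneg (by nlinarith [sq_nonneg c]) hρ.le
    nlinarith [sq_nonneg (c^2 - m/ρ)]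
  set R := Real.sqrt ((c^2 + m/ρ)^2 - 4*c^2*bξ^2/ρ) with hRdef
  have hR0 : 0 ≤ R := Real.sqrt_nonneg _
  have hR2 : R^2 = (c^2 + m/ρ)^2 - 4*c^2*bξ^2/ρ := Real.sq_sqrt hinner_nonneg
  have hRge : (c^2 - m/ρ)^2 ≤ R^2 := by
    rw [hR2, hinner_eq]
    have h1 : 0 ≤ 4*c^2*(m - bξ^2)/ρ :=
      div_nonneg (by nlinarith [sq_nonneg c]) hρ.le
    linarith
  have hRge1 : c^2 - m/ρ ≤ R := by nlinarith
  have hRge2 : m/ρ - c^2 ≤ R := by nlinarith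
  have hfeq : waveC pfun hd ξ U = Real.sqrt ((c^2 + m/ρ + R)/2) := rfl
  set f := waveC pfun hd ξ U with hfdef
  have hGR : 0 ≤ (c^2 + m/ρ + R)/2 := by
    have : 0 ≤ m/ρ := div_nonneg hm hρ.le
    nlinarith [sq_nonneg c]
  have hf0 : 0 ≤ f := by rw [hfeq]; exact Real.sqrt_nonneg _
  have hf2 : f^2 = (c^2 + m/ρ + R)/2 := by rw [hfeq]; exact Real.sq_sqrt hGR
  have hf2c : c^2 ≤ f^2 := by rw [hf2]; linarith
  have hf2m : m/ρ ≤ f^2 := by rw [hf2]; linarith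
  have hfpos : 0 < f := by nlinarith
  have hcf : c ≤ f := by nlinarith
  have hq : |bξ| / Real.sqrt ρ ≤ f := by
    have hsρ : (0:ℝ) < Real.sqrt ρ := Real.sqrt_pos.mpr hρ
    have hq2 : (|bξ| / Real.sqrt ρ)^2 = bξ^2/ρ := by
      rw [div_pow, sq_abs, Real.sq_sqrt hρ.le]
    have hble : bξ^2/ρ ≤ m/ρ := by gcongr
    have hq0 : 0 ≤ |bξ| / Real.sqrt ρ := div_nonneg (abs_nonneg _) hsρ.le
    nlinarith
  have hquart : f^4 = (c^2 + m/ρ)*f^2 - c^2*bξ^2/ρ := by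
    have h4 : f^4 = (f^2)^2 := by ring
    rw [h4, hf2]
    linear_combination (1/4) * hR2
  refine ⟨hfpos, hcf, hq, ?_⟩
  have : (f^2 - c^2) * (f^2 - bξ^2/ρ)
      = f^4 - (c^2 + bξ^2/ρ)*f^2 + c^2*(bξ^2/ρ) := by ring
  rw [this, hquart]
  field_simp
  ring



lemma embed {d : ℕ} (hd : d ≤ 3) (ξ : Fin d → ℝ) :
    ∃ ξh : Fin 3 → ℝ, (∀ w, dirDot hd ξ w = dot3 ξh w) ∧ sq3 ξh = ∑ k, ξ k ^ 2 := by
  refine ⟨fun k => if h : (k : ℕ) < d then ξ ⟨k, h⟩ else 0, fun w => ?_, ?_⟩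
  · interval_cases d <;>
      simp [dirDot, dot3, Fin.sum_univ_three, Fin.sum_univ_succ]
  · interval_cases d <;>
      simp [sq3, dot3, Fin.sum_univ_three, Fin.sum_univ_succ] <;> ring

set_option maxHeartbeats 1000000 in
lemma dot8_flux_nstar (pfun : ℝ → ℝ → ℝ) (U : MHDState) (vs Bs : Fin 3 → ℝ) (i : Fin 3) :
    dot8 (flux pfun i U) (nstar vs Bs) =
      vel U i * (dens U * sq3 vs / 2 - dens U * dot3 (vel U) vs - dot3 (magB U) Bs
        + toten U + ptot pfun U)
      + magB U i * (dot3 (magB U) vs + dot3 (vel U) Bs - dot3 (vel U) (magB U))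
      - ptot pfun U * vs i := by
  fin_cases i <;>
    simp [dot8, flux, nstar, mk, dot3, sq3, Fin.sum_univ_succ, Fin.sum_univ_zero,
      Matrix.cons_val_zero, Matrix.cons_val_succ] <;>
    ring

lemma dot8_dirFlux (pfun : ℝ → ℝ → ℝ) {d : ℕ} (hd : d ≤ 3) (ξ : Fin d → ℝ)
    (U : MHDState) (n : MHDState) :
    dot8 (dirFlux pfun hd ξ U) n = ∑ i, ξ i * dot8 (flux pfun (Fin.castLE hd i) U) n := by
  simp only [dot8, dirFlux, Finset.sum_apply, Pi.smul_apply, smul_eq_mul, Finset.sum_mul]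
  rw [Finset.sum_comm]
  exact Finset.sum_congr rfl fun i _ => by
    rw [Finset.mul_sum]
    exact Finset.sum_congr rfl fun j _ => by ring

set_option maxHeartbeats 2000000

/-- Lemma 2.8 (directional flux estimate). -/
theorem dir_flux_estimate (pfun : ℝ → ℝ → ℝ) (hEOS : IsEOS pfun)
    {d : ℕ} (hd1 : 1 ≤ d) (hd : d ≤ 3) (ξ : Fin d → ℝ) (hξ : unitVec ξ)
    (U : MHDState) (hU : U ∈ Gset) (vs Bs : Fin 3 → ℝ) :
    dot8 (dirFlux pfun hd ξ U) (nstar vs Bs) - dirDot hd ξ (magB U) * dot3 vs Bs ≤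
      dirDot hd ξ (vel U) * (theta U vs Bs 3 ^ 2 + theta U vs Bs 4 ^ 2
          + theta U vs Bs 5 ^ 2 + theta U vs Bs 6 ^ 2)
        + dirDot hd ξ vs * (sq3 (magB U) / 2 - dot3 (magB U) Bs)
        + waveC pfun hd ξ U * thetaSq U vs Bs := by

  obtain ⟨hρ, hie⟩ := hU
  obtain ⟨ξh, hdir, hsq⟩ := embed hd ξ
  have hξh : sq3 ξh = 1 := by rw [hsq]; exact hξ
  have he : 0 < specE U := div_pos hie hρ
  have hp : 0 < pres pfun U := (hEOS _ _ hρ).mp he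
  have hsp : 0 < Real.sqrt (2 * specE U) := Real.sqrt_pos.mpr (by linarith)
  have hc0 : 0 < soundC pfun U := div_pos hp (mul_pos hρ hsp)
  have hρs : Real.sqrt (dens U) * Real.sqrt (dens U) = dens U := Real.mul_self_sqrt hρ.le
  have hρspos : 0 < Real.sqrt (dens U) := Real.sqrt_pos.mpr hρ
  have hiespos : 0 < Real.sqrt (2 * intE U) := Real.sqrt_pos.mpr (by linarith)
  have hsie : Real.sqrt (2 * specE U) = Real.sqrt (2 * intE U) / Real.sqrt (dens U) := by
    have h1 : 2 * specE U = (2 * intE U) / dens U := by rw [specE]; ring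
    rw [h1, Real.sqrt_div (by linarith)]
  have hcp : soundC pfun U * (Real.sqrt (2 * intE U) * Real.sqrt (dens U)) = pres pfun U := by
    rw [soundC, hsie]
    field_simp
    linear_combination hρs
  have hBle : dirDot hd ξ (magB U) ^ 2 ≤ sq3 (magB U) := by
    rw [hdir]
    calc dot3 ξh (magB U) ^ 2 ≤ sq3 ξh * sq3 (magB U) := cs3 _ _
    _ = sq3 (magB U) := by rw [hξh, one_mul]
  obtain ⟨hf0, hcf, hqf, h3⟩ := waveC_facts pfun hd ξ U hρ hc0 hBle
  rw [hdir] at hqf h3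
  have hkey := keyIneq (dens U) (intE U) (pres pfun U) (soundC pfun U) (waveC pfun hd ξ U)
    ξh (magB U) (fun k => magB U k - Bs k) (fun k => vel U k - vs k)
    hρ hie hp hξh hc0.le hcp hf0 hcf hqf h3
  have hsplit : ∀ A C P : ℝ,
      (∑ i, ξ i * (vel U (Fin.castLE hd i) * A + magB U (Fin.castLE hd i) * C
        - P * vs (Fin.castLE hd i)))
      = dirDot hd ξ (vel U) * A + dirDot hd ξ (magB U) * C - P * dirDot hd ξ vs := by
    intro A C P
    rw [dirDot, dirDot, dirDot, Finset.sum_mul, Finset.sum_mul, Finset.mul_sum,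
      ← Finset.sum_add_distrib, ← Finset.sum_sub_distrib]
    exact Finset.sum_congr rfl fun i _ => by ring
  have hflux : dot8 (dirFlux pfun hd ξ U) (nstar vs Bs)
      = dot3 ξh (vel U) * (dens U * sq3 vs / 2 - dens U * dot3 (vel U) vs
          - dot3 (magB U) Bs + toten U + ptot pfun U)
        + dot3 ξh (magB U) * (dot3 (magB U) vs + dot3 (vel U) Bs - dot3 (vel U) (magB U))
        - ptot pfun U * dot3 ξh vs := by
    rw [dot8_dirFlux]
    simp_rw [dot8_flux_nstar]
    rw [hsplit, hdir, hdir, hdir]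
  have hmom : ∀ k, mom U k = dens U * vel U k := by
    intro k; rw [vel]; field_simp
  have hE : toten U = intE U + (dens U * sq3 (vel U) + sq3 (magB U)) / 2 := by
    have h1 : sq3 (mom U) = dens U ^ 2 * sq3 (vel U) := by
      simp only [sq3, dot3, Fin.sum_univ_three, hmom]; ring
    have h2 : intE U = toten U - (dens U ^ 2 * sq3 (vel U) / dens U + sq3 (magB U)) / 2 := by
      rw [intE, h1]
    have h3' : dens U ^ 2 * sq3 (vel U) / dens U = dens U * sq3 (vel U) := by
      field_simp
    rw [h3'] at h2
    linarith
  have h2s : Real.sqrt 2 ^ 2 = 2 := Real.sq_sqrt (by norm_num)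
  have hρs2 : Real.sqrt (dens U) ^ 2 = dens U := Real.sq_sqrt hρ.le
  have hies2 : Real.sqrt (2 * intE U) ^ 2 = 2 * intE U := Real.sq_sqrt (by linarith)
  have hθv : theta U vs Bs 3 ^ 2 + theta U vs Bs 4 ^ 2 + theta U vs Bs 5 ^ 2
      + theta U vs Bs 6 ^ 2
      = dens U * sq3 (fun k => vel U k - vs k) / 2 + intE U := by
    rw [show theta U vs Bs 3 = Real.sqrt (dens U) * (vel U 0 - vs 0) / Real.sqrt 2 from rfl,
      show theta U vs Bs 4 = Real.sqrt (dens U) * (vel U 1 - vs 1) / Real.sqrt 2 from rfl,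
      show theta U vs Bs 5 = Real.sqrt (dens U) * (vel U 2 - vs 2) / Real.sqrt 2 from rfl,
      show theta U vs Bs 6 = Real.sqrt (2 * intE U) / Real.sqrt 2 from rfl]
    simp only [div_pow, mul_pow, h2s, hρs2, hies2, sq3, dot3, Fin.sum_univ_three]
    ring
  have hθsq : thetaSq U vs Bs = (sq3 (fun k => magB U k - Bs k)
      + dens U * sq3 (fun k => vel U k - vs k) + 2 * intE U) / 2 := by
    rw [thetaSq, Fin.sum_univ_seven,
      show theta U vs Bs 0 = (magB U 0 - Bs 0) / Real.sqrt 2 from rfl,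
      show theta U vs Bs 1 = (magB U 1 - Bs 1) / Real.sqrt 2 from rfl,
      show theta U vs Bs 2 = (magB U 2 - Bs 2) / Real.sqrt 2 from rfl,
      show theta U vs Bs 3 = Real.sqrt (dens U) * (vel U 0 - vs 0) / Real.sqrt 2 from rfl,
      show theta U vs Bs 4 = Real.sqrt (dens U) * (vel U 1 - vs 1) / Real.sqrt 2 from rfl,
      show theta U vs Bs 5 = Real.sqrt (dens U) * (vel U 2 - vs 2) / Real.sqrt 2 from rfl,
      show theta U vs Bs 6 = Real.sqrt (2 * intE U) / Real.sqrt 2 from rfl]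
    simp only [div_pow, mul_pow, h2s, hρs2, hies2, sq3, dot3, Fin.sum_univ_three]
    ring
  rw [hflux, hE]
  simp only [hdir]
  rw [hθv, hθsq]
  have hid :
      dot3 ξh (vel U) * (dens U * sq3 vs / 2 - dens U * dot3 (vel U) vs
          - dot3 (magB U) Bs + (intE U + (dens U * sq3 (vel U) + sq3 (magB U)) / 2)
          + ptot pfun U)
        + dot3 ξh (magB U) * (dot3 (magB U) vs + dot3 (vel U) Bs - dot3 (vel U) (magB U))
        - ptot pfun U * dot3 ξh vs
        - dot3 ξh (magB U) * dot3 vs Bs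
      = dot3 ξh (vel U) * (dens U * sq3 (fun k => vel U k - vs k) / 2 + intE U)
        + dot3 ξh vs * (sq3 (magB U) / 2 - dot3 (magB U) Bs)
        + (dot3 ξh (fun k => vel U k - vs k)
            * (pres pfun U + dot3 (magB U) (fun k => magB U k - Bs k))
          - dot3 ξh (magB U) * dot3 (fun k => magB U k - Bs k) (fun k => vel U k - vs k)) := by
    rw [ptot]
    simp only [dot3, sq3, Fin.sum_univ_three]
    ring
  linarith [hkey, hid]
end MHD
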